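/- There exists a constant C₀ > 0, independent of q and R, such that for all integers R ≥ 1 and q ≥ 1 one has (1/q!) · Σ_{n=2}^{q+1} ((C₀R)^{-n}/n!) · Σ_{(I_1,…,I_n) ∈ 𝒮(R,q,n)} Π_{j=1}^{n} (|I_j|/R − 1)! ≤ 1. -/

import Mathlib

open scoped BigOperators Nat Classical

/-- The set `𝒮(R,q,n)` of sequences `(I_1, …, I_n)` of nonempty discrete intervals of
positive integers such that: each `|I_j|` is a positive multiple of `R`; for `j > 1` the
interval `I_j` intersects the union of the previous ones; the cardinalities sum to
`R(q+1)`; and the minimum of the union is `1`. -/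
noncomputable def intervalSeqs (R q n : ℕ) : Finset (Fin n → Finset ℕ) :=
  (Fintype.piFinset fun _ : Fin n => (Finset.Icc 1 (R * (q + 1))).powerset).filter
    fun I =>
      (∀ j, ∃ a b : ℕ, 1 ≤ a ∧ a ≤ b ∧ I j = Finset.Icc a b) ∧
      (∀ j, ∃ k : ℕ, 1 ≤ k ∧ (I j).card = R * k) ∧
      (∀ j : Fin n, 0 < (j : ℕ) →
        (I j ∩ (Finset.univ.filter fun i : Fin n => (i : ℕ) < (j : ℕ)).biUnion I).Nonempty) ∧
      (∑ j, (I j).card = R * (q + 1)) ∧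
      (1 ∈ Finset.univ.biUnion I)

open Finset

-- middle factorial bound, first half
lemma fac_half {M a : ℕ} (ha : 1 ≤ a) (h2 : 2 * a ≤ M) :
    a ! * (M - a)! ≤ (M - 1)! := by
  induction a with
  | zero => omega
  | succ a ih =>
    rcases Nat.eq_zero_or_pos a with h1 | h1
    · subst h1
      have h : M - 1 + 1 = M := by omega
      calc (1:ℕ)! * (M - 1)! = (M-1)! := by simp
        _ ≤ (M-1)! := le_refl _
    · have IH := ih h1 (by omega)
      have hb : M - (a+1) + 1 = M - a := by omega
      have hfac : (M - a)! = (M - a) * (M - (a+1))! := by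
        rw [← hb, Nat.factorial_succ]
      have key : (a+1)! * (M - (a+1))! * (M - a) ≤ (M-1)! * (M - a) := by
        have h3 : (a : ℕ) + 1 ≤ M - a := by omega
        calc (a+1)! * (M - (a+1))! * (M - a)
            = (a+1) * (a ! * ((M - a) * (M - (a+1))!)) := by
              rw [Nat.factorial_succ]; ring
          _ = (a+1) * (a ! * (M - a)!) := by rw [hfac]
          _ ≤ (M - a) * (M-1)! := by
              calc (a+1) * (a ! * (M - a)!) ≤ (a+1) * (M-1)! :=
                    Nat.mul_le_mul_left _ IH
                _ ≤ (M - a) * (M-1)! := Nat.mul_le_mul_right _ h3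
          _ = (M-1)! * (M - a) := by ring
      exact Nat.le_of_mul_le_mul_right key (by omega)

lemma fac_mid {M a : ℕ} (ha : 1 ≤ a) (ha2 : a + 1 ≤ M) :
    a ! * (M - a)! ≤ (M - 1)! := by
  rcases le_or_gt (2*a) M with h | h
  · exact fac_half ha h
  · have h1 : 1 ≤ M - a := by omega
    have h2 : 2 * (M - a) ≤ M := by omega
    have := fac_half h1 h2
    have hMa : M - (M - a) = a := by omega
    rw [hMa] at this
    calc a ! * (M - a)! = (M - a)! * a ! := by ring
      _ ≤ (M-1)! := this

-- K0
lemma sum_fac_mul_fac (M : ℕ) :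
    ∑ a ∈ range (M+1), a ! * (M - a)! ≤ 3 * M ! := by
  rcases Nat.lt_or_ge M 2 with hM | hM
  · interval_cases M <;> decide
  · obtain ⟨M', rfl⟩ : ∃ M', M = M' + 1 := ⟨M - 1, by omega⟩
    rw [Finset.sum_range_succ, Finset.sum_range_succ']
    have hmid : ∑ i ∈ range M', (i+1)! * (M' + 1 - (i+1))! ≤ M' * M' ! := by
      calc ∑ i ∈ range M', (i+1)! * (M' + 1 - (i+1))!
          ≤ ∑ _i ∈ range M', M' ! := by
            apply Finset.sum_le_sum
            intro i hi
            have hi' := Finset.mem_range.mp hi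
            have := fac_mid (M := M'+1) (a := i+1) (by omega) (by omega)
            simpa using this
        _ = M' * M' ! := by simp [mul_comm]
    have h0 : (0:ℕ)! * (M'+1-0)! = (M'+1)! := by simp
    have hlast : (M'+1)! * (M'+1-(M'+1))! = (M'+1)! := by simp
    rw [h0, hlast]
    have : M' * M' ! + M' ! ≤ (M'+1)! := by
      rw [Nat.factorial_succ]; nlinarith [Nat.factorial_pos M']
    omega


def compFinset (n M : ℕ) : Finset (Fin n → ℕ) :=
  (Fintype.piFinset fun _ : Fin n => Finset.range (M+1)).filter fun m => ∑ j, m j = M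

lemma mem_compFinset {n M : ℕ} {m : Fin n → ℕ} :
    m ∈ compFinset n M ↔ ∑ j, m j = M := by
  constructor
  · intro h; exact (Finset.mem_filter.mp h).2
  · intro h
    refine Finset.mem_filter.mpr ⟨Fintype.mem_piFinset.mpr fun j => ?_, h⟩
    rw [Finset.mem_range]
    have : m j ≤ ∑ i, m i := Finset.single_le_sum (fun i _ => Nat.zero_le _) (Finset.mem_univ j)
    omega

def compSum (n M : ℕ) : ℕ := ∑ m ∈ compFinset n M, ∏ j, (m j)!

lemma compSum_succ (n M : ℕ) :
    compSum (n+1) M = ∑ a ∈ Finset.range (M+1), a ! * compSum n (M - a) := by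
  unfold compSum
  rw [eq_comm]
  calc ∑ a ∈ range (M+1), a ! * ∑ r ∈ compFinset n (M-a), ∏ j, (r j)!
      = ∑ a ∈ range (M+1), ∑ r ∈ compFinset n (M-a), (a ! * ∏ j, (r j)!) := by
        simp [Finset.mul_sum]
    _ = ∑ p ∈ (range (M+1)).sigma (fun a => compFinset n (M - a)),
          ((p.1)! * ∏ j, (p.2 j)!) := by
        rw [Finset.sum_sigma]
    _ = ∑ m ∈ compFinset (n+1) M, ∏ j, (m j)! := by
        refine Finset.sum_bij' (fun p _ => Fin.cons p.1 p.2)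
          (fun m _ => ⟨m 0, fun j => m j.succ⟩) ?_ ?_ ?_ ?_ ?_
        · rintro ⟨a, r⟩ hp
          rw [Finset.mem_sigma] at hp
          obtain ⟨ha, hr⟩ := hp
          rw [Finset.mem_range] at ha
          rw [mem_compFinset] at hr ⊢
          rw [Fin.sum_univ_succ]
          simp only [Fin.cons_zero, Fin.cons_succ]
          dsimp only at ha hr ⊢
          rw [hr]; omega
        · intro m hm
          rw [mem_compFinset] at hm
          rw [Fin.sum_univ_succ] at hm
          refine Finset.mem_sigma.mpr ⟨?_, ?_⟩
          · refine Finset.mem_range.mpr ?_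
            dsimp only
            omega
          · rw [mem_compFinset]
            dsimp only
            omega
        · rintro ⟨a, r⟩ hp
          simp [Fin.cons_zero, Fin.cons_succ]
        · intro m hm
          exact Fin.cons_self_tail m
        · rintro ⟨a, r⟩ hp
          rw [Fin.prod_univ_succ]
          simp

lemma compSum_le (n M : ℕ) : compSum n M ≤ 3^n * M ! := by
  induction n generalizing M with
  | zero =>
    rcases Nat.eq_zero_or_pos M with rfl | hM
    · have hcard : (compFinset 0 0).card ≤ 1 :=
        Finset.card_le_one.mpr (fun a _ b _ => Subsingleton.elim a b)
      calc compSum 0 0 = ∑ m ∈ compFinset 0 0, 1 := by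
            unfold compSum; apply Finset.sum_congr rfl; intro m _; simp
        _ = (compFinset 0 0).card := by simp
        _ ≤ 1 := hcard
        _ ≤ 3^0 * 0! := by norm_num
    · have : compFinset 0 M = ∅ := by
        rw [Finset.eq_empty_iff_forall_notMem]
        intro m hm
        rw [mem_compFinset] at hm
        simp at hm
        omega
      unfold compSum
      rw [this]
      simp
  | succ n ih =>
    rw [compSum_succ]
    calc ∑ a ∈ range (M+1), a ! * compSum n (M - a)
        ≤ ∑ a ∈ range (M+1), a ! * (3^n * (M - a)!) := by
          apply Finset.sum_le_sum
          intro a _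
          exact Nat.mul_le_mul_left _ (ih (M - a))
      _ = 3^n * ∑ a ∈ range (M+1), a ! * (M - a)! := by
          rw [Finset.mul_sum]
          apply Finset.sum_congr rfl
          intro a _; ring
      _ ≤ 3^n * (3 * M !) := Nat.mul_le_mul_left _ (sum_fac_mul_fac M)
      _ = 3^(n+1) * M ! := by ring


-- (1+1/q)^q ≤ 3 in ℕ form
lemma pow_succ_le_three_mul (q : ℕ) (hq : 1 ≤ q) : (q+1)^q ≤ 3 * q^q := by
  have hq0 : (0:ℝ) < q := by exact_mod_cast hq
  have h1 : ((q:ℝ)+1)^q ≤ 3 * (q:ℝ)^q := by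
    have he : (1/(q:ℝ) + 1) ≤ Real.exp (1/q) := by
      have := Real.add_one_le_exp (1/(q:ℝ))
      linarith
    have hpow : (1/(q:ℝ) + 1)^q ≤ Real.exp (1/q) ^ q := by
      apply pow_le_pow_left₀ (by positivity) he
    have hexp : Real.exp (1/(q:ℝ)) ^ q = Real.exp 1 := by
      rw [← Real.exp_nat_mul]
      congr 1
      field_simp
    have h3 : Real.exp 1 ≤ 3 := by
      have := Real.exp_one_lt_d9
      linarith
    have hsplit : ((q:ℝ)+1)^q = (1/(q:ℝ) + 1)^q * (q:ℝ)^q := by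
      rw [← mul_pow]
      congr 1
      field_simp
      ring
    rw [hsplit]
    calc (1/(q:ℝ) + 1)^q * (q:ℝ)^q ≤ Real.exp 1 * (q:ℝ)^q := by
          apply mul_le_mul_of_nonneg_right _ (by positivity)
          rw [← hexp]; exact hpow
      _ ≤ 3 * (q:ℝ)^q := by
          apply mul_le_mul_of_nonneg_right h3 (by positivity)
  exact_mod_cast h1

-- K2
lemma pow_succ_le_three_mul' (q m : ℕ) (hq : 1 ≤ q) (hm : m ≤ q) :
    (q+1)^m ≤ 3 * q^m := by
  have h1 : (q+1)^m * q^(q-m) ≤ 3 * q^m * q^(q-m) := by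
    calc (q+1)^m * q^(q-m) ≤ (q+1)^m * (q+1)^(q-m) :=
          Nat.mul_le_mul_left _ (Nat.pow_le_pow_left (by omega) _)
      _ = (q+1)^q := by rw [← pow_add]; congr 1; omega
      _ ≤ 3 * q^q := pow_succ_le_three_mul q hq
      _ = 3 * q^m * q^(q-m) := by rw [mul_assoc, ← pow_add]; congr 2; omega
  exact Nat.le_of_mul_le_mul_right h1 (Nat.pow_pos (by omega))

-- K1
lemma key_fact_ineq (q m : ℕ) (hm : 1 ≤ m) (hmq : m ≤ q) :
    (q+1) * q^(m-1) * (q-m)! ≤ 2 * m ! * q ! := by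
  induction m with
  | zero => omega
  | succ m ih =>
    rcases Nat.eq_zero_or_pos m with rfl | hm1
    · -- base: m+1 = 1
      have hfac : q ! = q * (q-1)! := by
        obtain ⟨q', rfl⟩ : ∃ q', q = q' + 1 := ⟨q - 1, by omega⟩
        simp only [Nat.add_sub_cancel, Nat.factorial_succ]
      norm_num
      rw [hfac]
      calc (q+1) * (q-1)! = (q+1) * (q-1)! := rfl
        _ ≤ 2 * q * (q-1)! := by
            apply Nat.mul_le_mul_right
            omega
        _ = 2 * 1 * (q * (q-1)!) := by ring
  -- step
    · have IH := ih hm1 (by omega)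
      have hq1 : m + 1 ≤ q := hmq
      have hsub : q - m = (q - (m+1)) + 1 := by omega
      have hfac2 : (q-m)! = (q - m) * (q-(m+1))! := by
        rw [hsub, Nat.factorial_succ, ← hsub]
      have key : (q+1) * q^m * (q-(m+1))! * (q - m) ≤ 2 * (m+1)! * q ! * (q - m) := by
        calc (q+1) * q^m * (q-(m+1))! * (q - m)
            = q * ((q+1) * q^(m-1) * ((q-m) * (q-(m+1))!)) := by
              obtain ⟨m', rfl⟩ : ∃ m', m = m' + 1 := ⟨m - 1, by omega⟩
              simp only [Nat.add_sub_cancel]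
              ring
          _ = q * ((q+1) * q^(m-1) * (q-m)!) := by rw [hfac2]
          _ ≤ q * (2 * m ! * q !) := Nat.mul_le_mul_left _ IH
          _ ≤ ((m+1) * (q-m)) * (2 * m ! * q !) := by
              apply Nat.mul_le_mul_right
              obtain ⟨d, hd⟩ : ∃ d, q = m + d := ⟨q - m, by omega⟩
              subst hd
              have hd1 : 1 ≤ d := by omega
              have : m + d - m = d := by omega
              rw [this]
              nlinarith
          _ = 2 * (m+1)! * q ! * (q - m) := by
              rw [Nat.factorial_succ]; ring
      exact Nat.le_of_mul_le_mul_right key (by omega)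

-- T
lemma t_bound (q m : ℕ) (hq : 1 ≤ q) (hm : 1 ≤ m) (hmq : m ≤ q) :
    (q+1)^m * (q-m)! ≤ 6 * m ! * q ! := by
  have h1 : (q+1)^m = (q+1)^(m-1) * (q+1) := by
    rw [← pow_succ]; congr 1; omega
  have h2 : (q+1)^(m-1) ≤ 3 * q^(m-1) := pow_succ_le_three_mul' q (m-1) hq (by omega)
  calc (q+1)^m * (q-m)! = (q+1)^(m-1) * ((q+1) * (q-m)!) := by rw [h1]; ring
    _ ≤ (3 * q^(m-1)) * ((q+1) * (q-m)!) := Nat.mul_le_mul_right _ h2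
    _ = 3 * ((q+1) * q^(m-1) * (q-m)!) := by ring
    _ ≤ 3 * (2 * m ! * q !) := Nat.mul_le_mul_left _ (key_fact_ineq q m hm hmq)
    _ = 6 * m ! * q ! := by ring


noncomputable def low (s : Finset ℕ) : ℕ := sInf (s : Set ℕ)

lemma low_Icc {a b : ℕ} (h : a ≤ b) : low (Finset.Icc a b) = a := by
  rw [low, Finset.coe_Icc, csInf_Icc h]

lemma intervalSeqs_spec {R q n : ℕ} (hR : 1 ≤ R) {I : Fin n → Finset ℕ}
    (hI : I ∈ intervalSeqs R q n) (j : Fin n) :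
    1 ≤ low (I j) ∧ low (I j) ≤ R * (q+1) ∧
    I j = Finset.Icc (low (I j)) (low (I j) + (I j).card - 1) ∧
    (I j).card = R * ((I j).card / R) ∧ 1 ≤ (I j).card / R := by
  rw [intervalSeqs, Finset.mem_filter] at hI
  obtain ⟨hpi, h1, h2, h3, h4, h5⟩ := hI
  obtain ⟨a, b, ha1, hab, hIj⟩ := h1 j
  obtain ⟨k, hk1, hcard⟩ := h2 j
  have hsub : I j ⊆ Finset.Icc 1 (R*(q+1)) :=
    Finset.mem_powerset.mp (Fintype.mem_piFinset.mp hpi j)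
  have hb : b ≤ R * (q+1) := by
    have hbmem : b ∈ I j := by rw [hIj]; exact Finset.mem_Icc.mpr ⟨hab, le_refl b⟩
    exact (Finset.mem_Icc.mp (hsub hbmem)).2
  have hlow : low (I j) = a := by rw [hIj]; exact low_Icc hab
  have hcard' : (I j).card = b + 1 - a := by rw [hIj, Nat.card_Icc]
  have hdiv : (I j).card / R = k := by
    rw [hcard]; exact Nat.mul_div_cancel_left k (by omega)
  refine ⟨by omega, by omega, ?_, by rw [hdiv, ← hcard], by omega⟩
  rw [hcard', hlow, hIj]
  congr 1
  omega

lemma intervalSeqs_exists_one {R q n : ℕ} (hR : 1 ≤ R) {I : Fin n → Finset ℕ}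
    (hI : I ∈ intervalSeqs R q n) : ∃ j, low (I j) = 1 := by
  have hI' := hI
  rw [intervalSeqs, Finset.mem_filter] at hI'
  obtain ⟨hpi, h1, h2, h3, h4, h5⟩ := hI'
  obtain ⟨j₀, _, hmem⟩ := Finset.mem_biUnion.mp h5
  refine ⟨j₀, ?_⟩
  obtain ⟨hl1, _, hIcc, _, _⟩ := intervalSeqs_spec hR hI j₀
  rw [hIcc] at hmem
  have := (Finset.mem_Icc.mp hmem).1
  omega

lemma intervalSeqs_sum_div {R q n : ℕ} (hR : 1 ≤ R) {I : Fin n → Finset ℕ}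
    (hI : I ∈ intervalSeqs R q n) :
    ∑ j, ((I j).card / R - 1) = q + 1 - n := by
  have hI' := hI
  rw [intervalSeqs, Finset.mem_filter] at hI'
  obtain ⟨hpi, h1, h2, h3, h4, h5⟩ := hI'
  have hspec := fun j => intervalSeqs_spec hR hI j
  have hsum1 : ∑ j, R * ((I j).card / R) = R * (q+1) := by
    rw [← h4]
    apply Finset.sum_congr rfl
    intro j _
    exact ((hspec j).2.2.2.1).symm
  rw [← Finset.mul_sum] at hsum1
  have hsum2 : ∑ j, (I j).card / R = q + 1 := Nat.eq_of_mul_eq_mul_left (by omega) hsum1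
  have hsum3 : ∑ j, ((I j).card / R - 1 + 1) = ∑ j, (I j).card / R := by
    apply Finset.sum_congr rfl
    intro j _
    have := (hspec j).2.2.2.2
    omega
  rw [Finset.sum_add_distrib] at hsum3
  simp only [Finset.sum_const, Finset.card_univ, Fintype.card_fin, smul_eq_mul, mul_one] at hsum3
  omega

lemma card_A_le (R q n : ℕ) :
    ((Fintype.piFinset fun _ : Fin n => Finset.Icc 1 (R*(q+1))).filter
      (fun a => ∃ j, a j = 1)).card ≤ n * (R*(q+1))^(n-1) := by
  classical
  have hsub : (Fintype.piFinset fun _ : Fin n => Finset.Icc 1 (R*(q+1))).filter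
      (fun a => ∃ j, a j = 1) ⊆
      Finset.univ.biUnion (fun j₀ : Fin n => Fintype.piFinset fun j =>
        if j = j₀ then ({1} : Finset ℕ) else Finset.Icc 1 (R*(q+1))) := by
    intro a ha
    rw [Finset.mem_filter] at ha
    obtain ⟨hpi, j₀, hj₀⟩ := ha
    refine Finset.mem_biUnion.mpr ⟨j₀, Finset.mem_univ _, Fintype.mem_piFinset.mpr fun j => ?_⟩
    by_cases h : j = j₀
    · subst h; rw [if_pos rfl]; simp [hj₀]
    · rw [if_neg h]; exact Fintype.mem_piFinset.mp hpi j
  calc ((Fintype.piFinset fun _ : Fin n => Finset.Icc 1 (R*(q+1))).filter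
      (fun a => ∃ j, a j = 1)).card
      ≤ (Finset.univ.biUnion (fun j₀ : Fin n => Fintype.piFinset fun j =>
        if j = j₀ then ({1} : Finset ℕ) else Finset.Icc 1 (R*(q+1)))).card :=
        Finset.card_le_card hsub
    _ ≤ ∑ j₀ : Fin n, (Fintype.piFinset fun j =>
        if j = j₀ then ({1} : Finset ℕ) else Finset.Icc 1 (R*(q+1))).card :=
        Finset.card_biUnion_le
    _ ≤ ∑ _j₀ : Fin n, (R*(q+1))^(n-1) := by
        apply Finset.sum_le_sum
        intro j₀ _
        rw [Fintype.card_piFinset]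
        have : ∏ j : Fin n, (if j = j₀ then ({1} : Finset ℕ) else Finset.Icc 1 (R*(q+1))).card
            = (R*(q+1))^(n-1) := by
          rw [← Finset.mul_prod_erase Finset.univ _ (Finset.mem_univ j₀)]
          rw [if_pos rfl]
          have h2 : ∏ j ∈ Finset.univ.erase j₀,
              (if j = j₀ then ({1} : Finset ℕ) else Finset.Icc 1 (R*(q+1))).card
              = (R*(q+1))^(n-1) := by
            rw [Finset.prod_congr rfl (fun j hj => ?_), Finset.prod_const,
              Finset.card_erase_of_mem (Finset.mem_univ j₀), Finset.card_univ, Fintype.card_fin]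
            rw [if_neg (Finset.mem_erase.mp hj).1]
            rw [Nat.card_Icc]
            omega
          rw [h2]
          simp
        rw [this]
    _ = n * (R*(q+1))^(n-1) := by
        rw [Finset.sum_const, Finset.card_univ, Fintype.card_fin, smul_eq_mul]

lemma inner_sum_le (R q n : ℕ) (hR : 1 ≤ R) :
    ∑ I ∈ intervalSeqs R q n, ∏ j, ((I j).card / R - 1)! ≤
      n * (R*(q+1))^(n-1) * compSum n (q+1-n) := by
  classical
  set A := (Fintype.piFinset fun _ : Fin n => Finset.Icc 1 (R*(q+1))).filter
    (fun a => ∃ j, a j = 1) with hA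
  set Φ : (Fin n → Finset ℕ) → (Fin n → ℕ) × (Fin n → ℕ) :=
    fun I => (fun j => low (I j), fun j => (I j).card / R - 1) with hΦ
  have hmap : ∀ I ∈ intervalSeqs R q n, Φ I ∈ A ×ˢ compFinset n (q+1-n) := by
    intro I hI
    rw [Finset.mem_product]
    constructor
    · rw [hA, Finset.mem_filter]
      refine ⟨Fintype.mem_piFinset.mpr fun j => ?_, ?_⟩
      · obtain ⟨hl1, hl2, _, _, _⟩ := intervalSeqs_spec hR hI j
        exact Finset.mem_Icc.mpr ⟨hl1, hl2⟩
      · exact intervalSeqs_exists_one hR hI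
    · rw [mem_compFinset]
      exact intervalSeqs_sum_div hR hI
  have hinj : ∀ I ∈ intervalSeqs R q n, ∀ I' ∈ intervalSeqs R q n, Φ I = Φ I' → I = I' := by
    intro I hI I' hI' heq
    funext j
    have e1 : low (I j) = low (I' j) := congrFun (congrArg Prod.fst heq) j
    have e2 : (I j).card / R - 1 = (I' j).card / R - 1 := congrFun (congrArg Prod.snd heq) j
    obtain ⟨_, _, hIcc, hdvd, hd1⟩ := intervalSeqs_spec hR hI j
    obtain ⟨_, _, hIcc', hdvd', hd1'⟩ := intervalSeqs_spec hR hI' j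
    have ed : (I j).card / R = (I' j).card / R := by omega
    have ec : (I j).card = (I' j).card := by rw [hdvd, hdvd', ed]
    rw [hIcc, hIcc', e1, ec]
  calc ∑ I ∈ intervalSeqs R q n, ∏ j, ((I j).card / R - 1)!
      = ∑ p ∈ (intervalSeqs R q n).image Φ, ∏ j, (p.2 j)! := by
        rw [Finset.sum_image hinj]
    _ ≤ ∑ p ∈ A ×ˢ compFinset n (q+1-n), ∏ j, (p.2 j)! := by
        apply Finset.sum_le_sum_of_subset
        intro p hp
        obtain ⟨I, hI, rfl⟩ := Finset.mem_image.mp hp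
        exact hmap I hI
    _ = ∑ a ∈ A, ∑ m ∈ compFinset n (q+1-n), ∏ j, (m j)! := by
        rw [Finset.sum_product]
    _ = A.card * compSum n (q+1-n) := by
        rw [Finset.sum_const, smul_eq_mul]
        rfl
    _ ≤ n * (R*(q+1))^(n-1) * compSum n (q+1-n) :=
        Nat.mul_le_mul_right _ (card_A_le R q n)


lemma arith_bound (R q m : ℕ) (hR : 1 ≤ R) (hq : 1 ≤ q) (hm : 1 ≤ m) (hmq : m ≤ q) :
    2^(m+1) * ((m+1) * (R*(q+1))^m * (3^(m+1) * (q-m)!)) ≤ q ! * (m+1)! * (100*R)^(m+1) := by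
  have h6 : 6^(m+1) * 6 * R^m ≤ 100^(m+1) * R^(m+1) := by
    have ha : 6^(m+1) * 6 ≤ 100^(m+1) := by
      calc 6^(m+1) * 6 = 36 * 6^m := by ring
        _ ≤ 100 * 100^m := Nat.mul_le_mul (by norm_num) (Nat.pow_le_pow_left (by norm_num) m)
        _ = 100^(m+1) := by ring
    have hb : R^m ≤ R^(m+1) := Nat.pow_le_pow_right hR (by omega)
    exact Nat.mul_le_mul ha hb
  calc 2^(m+1) * ((m+1) * (R*(q+1))^m * (3^(m+1) * (q-m)!))
      = (2^(m+1) * 3^(m+1) * (m+1) * R^m) * ((q+1)^m * (q-m)!) := by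
        rw [mul_pow]; ring
    _ ≤ (2^(m+1) * 3^(m+1) * (m+1) * R^m) * (6 * m ! * q !) :=
        Nat.mul_le_mul_left _ (t_bound q m hq hm hmq)
    _ = (6^(m+1) * 6 * R^m) * (((m+1) * m !) * q !) := by
        rw [← mul_pow]; ring
    _ ≤ (100^(m+1) * R^(m+1)) * (((m+1) * m !) * q !) := Nat.mul_le_mul_right _ h6
    _ = q ! * (m+1)! * (100*R)^(m+1) := by
        rw [mul_pow, Nat.factorial_succ]; ring

lemma per_term_nat (R q n : ℕ) (hR : 1 ≤ R) (hq : 1 ≤ q) (hn : 2 ≤ n) (hn2 : n ≤ q+1) :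
    2^n * (∑ I ∈ intervalSeqs R q n, ∏ j, ((I j).card / R - 1)!) ≤ q ! * n ! * (100*R)^n := by
  obtain ⟨m, rfl⟩ : ∃ m, n = m + 1 := ⟨n - 1, by omega⟩
  have hm : 1 ≤ m := by omega
  have hmq : m ≤ q := by omega
  have hqm : q + 1 - (m+1) = q - m := by omega
  calc 2^(m+1) * (∑ I ∈ intervalSeqs R q (m+1), ∏ j, ((I j).card / R - 1)!)
      ≤ 2^(m+1) * ((m+1) * (R*(q+1))^((m+1)-1) * compSum (m+1) (q+1-(m+1))) :=
        Nat.mul_le_mul_left _ (inner_sum_le R q (m+1) hR)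
    _ ≤ 2^(m+1) * ((m+1) * (R*(q+1))^m * (3^(m+1) * (q-m)!)) := by
        apply Nat.mul_le_mul_left
        simp only [Nat.add_sub_cancel, hqm]
        exact Nat.mul_le_mul_left _ (compSum_le (m+1) (q-m))
    _ ≤ q ! * (m+1)! * (100*R)^(m+1) := arith_bound R q m hR hq hm hmq

/-- Lemma 1 of the paper: there is a constant `C₀ > 0`, independent of `q`
and `R`, such that for all integers `R ≥ 1` and `q ≥ 1`,
`(1/q!) Σ_{n=2}^{q+1} ((C₀R)^{-n}/n!) Σ_{(I_j) ∈ 𝒮(R,q,n)} Π_j (|I_j|/R − 1)! ≤ 1`. -/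
theorem interval_sum_lemma :
    ∃ C₀ : ℝ, 0 < C₀ ∧ ∀ R q : ℕ, 1 ≤ R → 1 ≤ q →
      (1 / (q ! : ℝ)) *
        ∑ n ∈ Finset.Icc 2 (q + 1),
          (((C₀ * (R : ℝ)) ^ n)⁻¹ / (n ! : ℝ)) *
            ∑ I ∈ intervalSeqs R q n, ∏ j : Fin n, (((I j).card / R - 1)! : ℝ) ≤ 1 := by
  refine ⟨100, by norm_num, ?_⟩
  intro R q hR hq
  have hq0 : (0:ℝ) < (q ! : ℝ) := by exact_mod_cast Nat.factorial_pos q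
  have hR0 : (1:ℝ) ≤ (R:ℝ) := by exact_mod_cast hR
  have hterm : ∀ n ∈ Finset.Icc 2 (q+1),
      (((100 * (R:ℝ)) ^ n)⁻¹ / (n ! : ℝ)) *
        (∑ I ∈ intervalSeqs R q n, ∏ j : Fin n, (((I j).card / R - 1)! : ℝ))
      ≤ (q ! : ℝ) * (1/2)^n := by
    intro n hn
    rw [Finset.mem_Icc] at hn
    have hcast : (∑ I ∈ intervalSeqs R q n, ∏ j : Fin n, (((I j).card / R - 1)! : ℝ))
        = ((∑ I ∈ intervalSeqs R q n, ∏ j, ((I j).card / R - 1)! : ℕ) : ℝ) := by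
      push_cast
      rfl
    rw [hcast]
    set N : ℕ := ∑ I ∈ intervalSeqs R q n, ∏ j, ((I j).card / R - 1)! with hN
    have hkey : ((N : ℝ)) * 2^n ≤ (q ! : ℝ) * ((100 * (R:ℝ))^n * (n ! : ℝ)) := by
      have := per_term_nat R q n hR hq hn.1 hn.2
      have hcast2 : ((2^n * N : ℕ) : ℝ) ≤ ((q ! * n ! * (100*R)^n : ℕ) : ℝ) := by
        exact_mod_cast this
      push_cast at hcast2
      nlinarith [hcast2]
    have hx : (0:ℝ) < (100 * (R:ℝ))^n := by positivity
    have hnf : (0:ℝ) < (n ! : ℝ) := by exact_mod_cast Nat.factorial_pos n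
    have h2 : (0:ℝ) < (2:ℝ)^n := by positivity
    have heq1 : (((100 * (R:ℝ)) ^ n)⁻¹ / (n ! : ℝ)) * (N : ℝ)
        = (N : ℝ) / ((100 * (R:ℝ))^n * (n ! : ℝ)) := by
      field_simp
    have heq2 : ((q ! : ℝ)) * (1/2)^n = (q ! : ℝ) / (2:ℝ)^n := by
      rw [div_pow]
      ring
    rw [heq1, heq2, div_le_div_iff₀ (by positivity) h2]
    linarith [hkey]
  have hsum : ∑ n ∈ Finset.Icc 2 (q+1), ((1:ℝ)/2)^n ≤ 1 := by
    have h1 : Finset.Icc 2 (q+1) = Finset.Ico 2 (q+2) := by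
      rw [← Finset.Ico_add_one_right_eq_Icc]; rfl
    rw [h1, Finset.sum_Ico_eq_sum_range]
    have h2 : ∀ i ∈ Finset.range (q+2-2), ((1:ℝ)/2)^(2+i) = (1/4) * (1/2)^i := by
      intro i _
      rw [pow_add]
      norm_num
    rw [Finset.sum_congr rfl h2, ← Finset.mul_sum]
    have := sum_geometric_two_le (q+2-2)
    nlinarith [this]
  calc (1 / (q ! : ℝ)) *
        ∑ n ∈ Finset.Icc 2 (q + 1),
          (((100 * (R : ℝ)) ^ n)⁻¹ / (n ! : ℝ)) *
            ∑ I ∈ intervalSeqs R q n, ∏ j : Fin n, (((I j).card / R - 1)! : ℝ)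
      ≤ (1 / (q ! : ℝ)) * ∑ n ∈ Finset.Icc 2 (q + 1), (q ! : ℝ) * (1/2)^n := by
        apply mul_le_mul_of_nonneg_left (Finset.sum_le_sum hterm) (by positivity)
    _ = ∑ n ∈ Finset.Icc 2 (q + 1), ((1:ℝ)/2)^n := by
        rw [← Finset.mul_sum, ← mul_assoc]
        rw [one_div, inv_mul_cancel₀ (ne_of_gt hq0), one_mul]
    _ ≤ 1 := hsum
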